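/- arXiv:2105.03149 — 2 statements merged into one kernel-verified Lean document; each statement's English description precedes it below -/
import Mathlib

section
/- Let V be a real vector space, n a natural number with n ≥ 3, ρ ∈ V, A a linear functional on V with A(ρ) = −1, and α, β real numbers. Define Q(U) = α·U + β·A(U)·ρ, S(U,ρ) = (α − β)·A(U), r = n·α − β, and R(U,W) = ((α − β)/(1 − n))·(A(U)·W − A(W)·U). Then for all U, W ∈ V: R(U,W) − (1/(n−2))·[ A(W)·Q(U) − A(U)·Q(W) + S(W,ρ)·U − S(U,ρ)·W − (r/(n−1))·(A(W)·U − A(U)·W) ] = 0. -/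
/-- Pointwise algebraic content of Theorem 2.1: with `Q U = α • U + β • A U • ρ`,
`S(U,ρ) = (α - β) A U`, `r = n α - β` and
`R(U,W) = ((α - β)/(1 - n)) • (A U • W - A W • U)`, the Weyl-type combination
`R(U,W) - (1/(n-2)) [A W • Q U - A U • Q W + S(W,ρ) • U - S(U,ρ) • W
  - (r/(n-1)) (A W • U - A U • W)]` vanishes, i.e. `C(U,W)ρ = 0`. -/
theorem stmt_4 (V : Type*) [AddCommGroup V] [Module ℝ V]
    (n : ℕ) (hn : 3 ≤ n)
    (ρ : V) (A : V →ₗ[ℝ] ℝ) (hA : A ρ = -1) (α β : ℝ)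
    (Q : V → V) (hQ : ∀ U : V, Q U = α • U + β • A U • ρ) :
    ∀ U W : V,
      ((α - β) / (1 - (n : ℝ))) • (A U • W - A W • U)
        - ((1 : ℝ) / ((n : ℝ) - 2)) •
          (A W • Q U - A U • Q W
            + ((α - β) * A W) • U - ((α - β) * A U) • W
            - (((n : ℝ) * α - β) / ((n : ℝ) - 1)) • (A W • U - A U • W)) = 0 := by
  intro U W
  have h3 : (3 : ℝ) ≤ (n : ℝ) := by exact_mod_cast hn
  have h1 : (1 : ℝ) - (n : ℝ) ≠ 0 := by linarith
  have h2 : (n : ℝ) - 2 ≠ 0 := by intro h; linarith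
  have h4 : (n : ℝ) - 1 ≠ 0 := by intro h; linarith
  rw [hQ U, hQ W]
  match_scalars <;> (field_simp; ring)
end

section
/- Let V be a real vector space, g a symmetric bilinear form on V, ρ ∈ V with g(ρ,ρ) = −1, A the linear functional A(X) = g(X,ρ), P a symmetric bilinear form on V, and c a nonzero real number. Suppose (i) P(W,ρ) = −A(W)·P(ρ,ρ) for all W ∈ V, and (ii) for all U, X, Y ∈ V: P(c·(g(U,X)·ρ − A(X)·U), Y) + P(X, c·(g(U,Y)·ρ − A(Y)·U)) = 0. Then P(X,U) = −P(ρ,ρ)·g(X,U) for all X, U ∈ V; in particular P is a constant multiple of g. -/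
/-- Second algebraic step of Theorem 3.1: if `P(W,ρ) = -A W * P(ρ,ρ)` and
`P(R(U,ρ)X, Y) + P(X, R(U,ρ)Y) = 0` with `R(U,ρ)X = c (g(U,X) ρ - A X U)`, `c ≠ 0`,
then `P(X,U) = -P(ρ,ρ) g(X,U)`, so `P` is a constant multiple of `g`. -/
theorem stmt_6 (V : Type*) [AddCommGroup V] [Module ℝ V]
    (g : LinearMap.BilinForm ℝ V) (hgsym : ∀ X Y : V, g X Y = g Y X)
    (ρ : V) (hρ : g ρ ρ = -1)
    (A : V → ℝ) (hA : ∀ X : V, A X = g X ρ)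
    (P : LinearMap.BilinForm ℝ V) (hPsym : ∀ X Y : V, P X Y = P Y X)
    (c : ℝ) (hc : c ≠ 0)
    (h1 : ∀ W : V, P W ρ = -(A W * P ρ ρ))
    (h2 : ∀ U X Y : V,
      P (c • (g U X • ρ - A X • U)) Y + P X (c • (g U Y • ρ - A Y • U)) = 0) :
    ∀ X U : V, P X U = -(P ρ ρ * g X U) := by
  intro X U
  have h := h2 U X ρ
  simp only [map_smul, map_sub, LinearMap.smul_apply, LinearMap.sub_apply, smul_eq_mul,
    LinearMap.map_smul₂, LinearMap.map_sub₂] at h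
  rw [h1 X, h1 U, hA ρ, hρ, ← hA U] at h
  rw [hgsym X U]
  have : c * (P X U + P ρ ρ * g U X) = 0 := by ring_nf; ring_nf at h; linarith
  have := mul_eq_zero.mp this
  rcases this with h' | h'
  · exact absurd h' hc
  · linarith
end
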